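/- Let h : ℝ → ℝ be continuously differentiable with h(θ + π) = h(θ) + π for all θ, and suppose there exists x ∈ (0, π) such that h′ > 0 on (0, x) and h′ < 0 on (x, π), and that h(x) − h(0) ≤ 2π. Let α ∈ ℝ with α ≢ h(0) (mod π) and α ≢ h(x) (mod π). Then exactly one of the following holds: (1) there is exactly one congruence class mod 2π of solutions θ of h(θ) ≡ α (mod 2π), and h′(θ) > 0 at every such solution; or (2) there are exactly three congruence classes mod 2π of solutions, and they admit representatives θ₁ < θ₂ < θ₃ with θ₃ − θ₁ < π, h′(θ₁) > 0, h′(θ₂) < 0, and h′(θ₃) > 0. -/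

import Mathlib

open Real

set_option maxHeartbeats 1600000 in
/-- counting of fixed points in the intermediate (Lemon vs Monstar)
case: either exactly one congruence class mod 2π of solutions of `h(θ) ≡ α (mod 2π)`,
all with `h′ > 0`, or exactly three classes with representatives
`θ₁ < θ₂ < θ₃`, `θ₃ − θ₁ < π`, with derivative signs `+`, `−`, `+`. -/
theorem one_or_three_solutions_intermediate_case (h : ℝ → ℝ)
    (hC1 : ContDiff ℝ 1 h)
    (hper : ∀ θ : ℝ, h (θ + π) = h θ + π)
    (x : ℝ) (hx : x ∈ Set.Ioo 0 π)
    (hpos : ∀ θ ∈ Set.Ioo 0 x, 0 < deriv h θ)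
    (hneg : ∀ θ ∈ Set.Ioo x π, deriv h θ < 0)
    (hbound : h x - h 0 ≤ 2 * π)
    (α : ℝ) (hα0 : ∀ k : ℤ, α ≠ h 0 + π * k) (hαx : ∀ k : ℤ, α ≠ h x + π * k) :
    Xor'
      ((∃ θ₀ : ℝ, (∃ k : ℤ, h θ₀ = α + 2 * π * k) ∧
          ∀ θ : ℝ, (∃ k : ℤ, h θ = α + 2 * π * k) → ∃ m : ℤ, θ = θ₀ + 2 * π * m) ∧
        ∀ θ : ℝ, (∃ k : ℤ, h θ = α + 2 * π * k) → 0 < deriv h θ)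
      (∃ θ₁ θ₂ θ₃ : ℝ, θ₁ < θ₂ ∧ θ₂ < θ₃ ∧ θ₃ - θ₁ < π ∧
        (∃ k : ℤ, h θ₁ = α + 2 * π * k) ∧
        (∃ k : ℤ, h θ₂ = α + 2 * π * k) ∧
        (∃ k : ℤ, h θ₃ = α + 2 * π * k) ∧
        0 < deriv h θ₁ ∧ deriv h θ₂ < 0 ∧ 0 < deriv h θ₃ ∧
        ∀ θ : ℝ, (∃ k : ℤ, h θ = α + 2 * π * k) →
          ∃ m : ℤ, θ = θ₁ + 2 * π * m ∨ θ = θ₂ + 2 * π * m ∨ θ = θ₃ + 2 * π * m) := by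
  obtain ⟨hx0, hxpi⟩ := hx
  have hπ : (0:ℝ) < π := Real.pi_pos
  have hcont : Continuous h := hC1.continuous
  -- periodicity facts
  have hsub : ∀ t : ℝ, h (t - 2 * π) = h t - 2 * π := by
    intro t
    have e1 := hper (t - 2 * π)
    have e2 := hper (t - π)
    have : t - 2 * π + π = t - π := by ring
    rw [this] at e1
    have : t - π + π = t := by ring
    rw [this] at e2
    linarith
  have hder : ∀ θ : ℝ, deriv h (θ + π) = deriv h θ := by
    intro θ
    have e : (fun t => h (t + π)) = fun t => h t + π := funext fun t => hper t
    have h1 : deriv (fun t => h (t + π)) θ = deriv h (θ + π) :=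
      deriv_comp_add_const h π θ
    rw [e] at h1
    rw [← h1]
    simp
  have dersub : ∀ t : ℝ, deriv h (t - 2 * π) = deriv h t := by
    intro t
    have e1 := hder (t - 2 * π)
    have e2 := hder (t - π)
    have g1 : t - 2 * π + π = t - π := by ring
    have g2 : t - π + π = t := by ring
    rw [g1] at e1; rw [g2] at e2
    linarith
  -- h(θ + 2πm) = h θ + 2πm for m : ℤ
  have h2Z : ∀ (m : ℤ) (t : ℝ), h (t + 2 * π * m) = h t + 2 * π * m := by
    intro m
    induction m using Int.induction_on with
    | zero => intro t; simp
    | succ n ih =>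
        intro t
        have e : t + 2 * π * ((n : ℤ) + 1 : ℤ) = (t + 2 * π * (n : ℤ)) + π + π := by
          push_cast; ring
        rw [e, hper, hper, ih]
        push_cast; ring
    | pred n ih =>
        intro t
        have e : t + 2 * π * (-(n : ℤ) - 1 : ℤ) = (t + 2 * π * (-(n : ℤ) : ℤ)) - 2 * π := by
          push_cast; ring
        rw [e, hsub, ih]
        push_cast; ring
  have der2Z : ∀ (m : ℤ) (t : ℝ), deriv h (t + 2 * π * m) = deriv h t := by
    intro m
    induction m using Int.induction_on with
    | zero => intro t; simp
    | succ n ih =>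
        intro t
        have e : t + 2 * π * ((n : ℤ) + 1 : ℤ) = ((t + 2 * π * (n : ℤ)) + π) + π := by
          push_cast; ring
        rw [e, hder, hder, ih]
    | pred n ih =>
        intro t
        have e : t + 2 * π * (-(n : ℤ) - 1 : ℤ) = (t + 2 * π * (-(n : ℤ) : ℤ)) - 2 * π := by
          push_cast; ring
        rw [e, dersub, ih]
  have hpi0 : h π = h 0 + π := by simpa using hper 0
  have hxpi' : h (x + π) = h x + π := hper x
  have h2pi : h (2 * π) = h 0 + 2 * π := by
    have := hper π
    rw [hpi0] at this
    rw [show (2:ℝ) * π = π + π by ring, this]; ring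
  -- monotonicity on the four branches
  have mono1 : StrictMonoOn h (Set.Icc 0 x) := by
    apply strictMonoOn_of_deriv_pos (convex_Icc 0 x) hcont.continuousOn
    intro t ht
    rw [interior_Icc] at ht
    exact hpos t ht
  have anti1 : StrictAntiOn h (Set.Icc x π) := by
    apply strictAntiOn_of_deriv_neg (convex_Icc x π) hcont.continuousOn
    intro t ht
    rw [interior_Icc] at ht
    exact hneg t ht
  have dpos2 : ∀ t : ℝ, π < t → t < x + π → 0 < deriv h t := by
    intro t h1 h2
    have e := hder (t - π)
    rw [show t - π + π = t by ring] at e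
    have := hpos (t - π) ⟨by linarith, by linarith⟩
    linarith
  have dneg2 : ∀ t : ℝ, x + π < t → t < 2 * π → deriv h t < 0 := by
    intro t h1 h2
    have e := hder (t - π)
    rw [show t - π + π = t by ring] at e
    have := hneg (t - π) ⟨by linarith, by linarith⟩
    linarith
  have mono2 : StrictMonoOn h (Set.Icc π (x + π)) := by
    apply strictMonoOn_of_deriv_pos (convex_Icc π (x + π)) hcont.continuousOn
    intro t ht
    rw [interior_Icc] at ht
    exact dpos2 t ht.1 ht.2
  have anti2 : StrictAntiOn h (Set.Icc (x + π) (2 * π)) := by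
    apply strictAntiOn_of_deriv_neg (convex_Icc (x + π) (2 * π)) hcont.continuousOn
    intro t ht
    rw [interior_Icc] at ht
    exact dneg2 t ht.1 ht.2
  have hab : h 0 < h x := mono1 ⟨le_rfl, hx0.le⟩ ⟨hx0.le, le_rfl⟩ hx0
  have hbgt : h 0 + π < h x := by
    have := anti1 ⟨le_rfl, hxpi.le⟩ ⟨hxpi.le, le_rfl⟩ hxpi
    rw [hpi0] at this
    -- this : h π < h x  after the membership; careful
    linarith
  -- bounds on the four branches
  have bd1 : ∀ t : ℝ, 0 ≤ t → t ≤ x → h 0 ≤ h t ∧ h t ≤ h x := by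
    intro t h1 h2
    exact ⟨mono1.monotoneOn ⟨le_rfl, hx0.le⟩ ⟨h1, h2⟩ h1,
      mono1.monotoneOn ⟨h1, h2⟩ ⟨hx0.le, le_rfl⟩ h2⟩
  have bd2 : ∀ t : ℝ, x ≤ t → t ≤ π → h 0 + π ≤ h t ∧ h t ≤ h x := by
    intro t h1 h2
    have l := anti1.antitoneOn ⟨h1, h2⟩ ⟨hxpi.le, le_rfl⟩ h2
    have u := anti1.antitoneOn ⟨le_rfl, hxpi.le⟩ ⟨h1, h2⟩ h1
    rw [hpi0] at l
    exact ⟨l, u⟩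
  have bd3 : ∀ t : ℝ, π ≤ t → t ≤ x + π → h 0 + π ≤ h t ∧ h t ≤ h x + π := by
    intro t h1 h2
    have l := mono2.monotoneOn ⟨le_rfl, by linarith⟩ ⟨h1, h2⟩ h1
    have u := mono2.monotoneOn ⟨h1, h2⟩ ⟨by linarith, le_rfl⟩ h2
    rw [hpi0] at l; rw [hxpi'] at u
    exact ⟨l, u⟩
  have bd4 : ∀ t : ℝ, x + π ≤ t → t ≤ 2 * π → h 0 + 2 * π ≤ h t ∧ h t ≤ h x + π := by
    intro t h1 h2
    have l := anti2.antitoneOn ⟨h1, h2⟩ ⟨by linarith, le_rfl⟩ h2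
    have u := anti2.antitoneOn ⟨le_rfl, by linarith⟩ ⟨h1, h2⟩ h1
    rw [h2pi] at l; rw [hxpi'] at u
    exact ⟨l, u⟩
  -- the representative A of α mod 2π in (h 0, h 0 + 2π)
  set k0 : ℤ := ⌈(h 0 - α) / (2 * π)⌉ with hk0def
  set A : ℝ := α + 2 * π * k0 with hAdef
  have h2π : (0:ℝ) < 2 * π := by linarith
  have hA1 : h 0 ≤ A := by
    have := Int.le_ceil ((h 0 - α) / (2 * π))
    rw [div_le_iff₀ h2π] at this
    rw [hAdef]; linarith [this]
  have hA2 : A < h 0 + 2 * π := by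
    have := Int.ceil_lt_add_one ((h 0 - α) / (2 * π))
    rw [show ((h 0 - α) / (2 * π) + 1) = (h 0 - α + 2 * π) / (2 * π) by field_simp] at this
    rw [lt_div_iff₀ h2π] at this
    rw [hAdef]; linarith [this]
  have hA1' : h 0 < A := by
    rcases lt_or_eq_of_le hA1 with hlt | heq
    · exact hlt
    · exfalso
      apply hα0 (-2 * k0)
      rw [hAdef] at heq
      push_cast
      linarith [heq]
  have hAne0pi : A ≠ h 0 + π := by
    intro he
    apply hα0 (1 - 2 * k0)
    rw [hAdef] at he
    push_cast
    linarith [he]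
  have hAnex : A ≠ h x := by
    intro he
    apply hαx (-2 * k0)
    rw [hAdef] at he
    push_cast
    linarith [he]
  have hAnexpi : A ≠ h x - π := by
    intro he
    apply hαx (-1 - 2 * k0)
    rw [hAdef] at he
    push_cast
    linarith [he]
  -- reduction of an arbitrary solution to the fundamental domain
  have reduce : ∀ θ : ℝ, (∃ k : ℤ, h θ = α + 2 * π * k) →
      ∃ (m j : ℤ) (θ' : ℝ), θ = θ' + 2 * π * m ∧ 0 ≤ θ' ∧ θ' < 2 * π ∧
        h θ' = A + 2 * π * j ∧ (j = 0 ∨ j = 1) := by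
    intro θ ⟨k, hk⟩
    set m : ℤ := ⌊θ / (2 * π)⌋ with hm
    set θ' : ℝ := θ - 2 * π * m with hθ'
    have hrep : θ = θ' + 2 * π * m := by rw [hθ']; ring
    have hlo : 0 ≤ θ' := by
      have := Int.floor_le (θ / (2 * π))
      rw [le_div_iff₀ h2π] at this
      rw [hθ']; linarith
    have hhi : θ' < 2 * π := by
      have := Int.lt_floor_add_one (θ / (2 * π))
      rw [div_lt_iff₀ h2π] at this
      rw [hθ']; nlinarith
    have hval : h θ' = A + 2 * π * ((k - k0 - m : ℤ) : ℝ) := by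
      have := h2Z m θ'
      rw [← hrep] at this
      rw [hAdef]
      push_cast
      linarith [this, hk]
    set j : ℤ := k - k0 - m with hj
    -- bound j using the global range of h on [0, 2π]
    have hrange : h 0 ≤ h θ' ∧ h θ' ≤ h x + π := by
      rcases le_or_gt θ' x with c1 | c1
      · have := bd1 θ' hlo c1
        constructor <;> linarith [this.1, this.2]
      · rcases le_or_gt θ' π with c2 | c2
        · have := bd2 θ' c1.le c2
          constructor <;> linarith [this.1, this.2]
        · rcases le_or_gt θ' (x + π) with c3 | c3
          · have := bd3 θ' c2.le c3
            constructor <;> linarith [this.1, this.2]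
          · have := bd4 θ' c3.le hhi.le
            constructor <;> linarith [this.1, this.2]
    have hj0 : (0:ℤ) ≤ j := by
      by_contra hc
      push_neg at hc
      have hj' : j ≤ -1 := by omega
      have : (j:ℝ) ≤ -1 := by exact_mod_cast hj'
      nlinarith [hrange.1, hval, hA2]
    have hj1 : j ≤ 1 := by
      by_contra hc
      push_neg at hc
      have hj' : (2:ℤ) ≤ j := by omega
      have : (2:ℝ) ≤ (j:ℝ) := by exact_mod_cast hj'
      nlinarith [hrange.2, hval, hA1', hbound]
    exact ⟨m, j, θ', hrep, hlo, hhi, hval, by omega⟩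
  -- existence of solutions on each branch
  have ex1 : ∀ y : ℝ, h 0 < y → y < h x → ∃ t, 0 < t ∧ t < x ∧ h t = y := by
    intro y l u
    obtain ⟨t, ht, he⟩ := intermediate_value_Ioo hx0.le hcont.continuousOn ⟨l, u⟩
    exact ⟨t, ht.1, ht.2, he⟩
  have ex2 : ∀ y : ℝ, h 0 + π < y → y < h x → ∃ t, x < t ∧ t < π ∧ h t = y := by
    intro y l u
    have l' : h π < y := by rw [hpi0]; exact l
    obtain ⟨t, ht, he⟩ := intermediate_value_Ioo' hxpi.le hcont.continuousOn ⟨l', u⟩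
    exact ⟨t, ht.1, ht.2, he⟩
  have ex3 : ∀ y : ℝ, h 0 + π < y → y < h x + π → ∃ t, π < t ∧ t < x + π ∧ h t = y := by
    intro y l u
    have l' : h π < y := by rw [hpi0]; exact l
    have u' : y < h (x + π) := by rw [hxpi']; exact u
    obtain ⟨t, ht, he⟩ :=
      intermediate_value_Ioo (by linarith : π ≤ x + π) hcont.continuousOn ⟨l', u'⟩
    exact ⟨t, ht.1, ht.2, he⟩
  have ex4 : ∀ y : ℝ, h 0 + 2 * π < y → y < h x + π →
      ∃ t, x + π < t ∧ t < 2 * π ∧ h t = y := by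
    intro y l u
    have l' : h (2 * π) < y := by rw [h2pi]; exact l
    have u' : y < h (x + π) := by rw [hxpi']; exact u
    obtain ⟨t, ht, he⟩ :=
      intermediate_value_Ioo' (by linarith : x + π ≤ 2 * π) hcont.continuousOn ⟨l', u'⟩
    exact ⟨t, ht.1, ht.2, he⟩
  -- main case split on the position of A
  rcases lt_trichotomy A (h x - π) with hc | hc | hc
  · -- CASE 1 : A ∈ (h 0, h x - π) : three solution classes
    obtain ⟨θ₁, p11, p12, hv1⟩ := ex1 A hA1' (by linarith)
    obtain ⟨θ₃, p31, p32, hv3⟩ := ex3 (A + 2 * π) (by linarith) (by linarith)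
    obtain ⟨θ₄, p41, p42, hv4⟩ := ex4 (A + 2 * π) (by linarith) (by linarith)
    have cls : ∀ θ : ℝ, (∃ k : ℤ, h θ = α + 2 * π * k) →
        ∃ m : ℤ, θ = (θ₃ - 2 * π) + 2 * π * m ∨ θ = (θ₄ - 2 * π) + 2 * π * m ∨
          θ = θ₁ + 2 * π * m := by
      intro θ hs
      obtain ⟨m, j, θ', rfl, hlo, hhi, hval, hj⟩ := reduce θ hs
      rcases le_or_gt θ' x with c1 | c1
      · obtain ⟨l, u⟩ := bd1 θ' hlo c1
        rcases hj with rfl | rfl <;> norm_num at hval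
        · have e : θ' = θ₁ :=
            mono1.injOn ⟨hlo, c1⟩ ⟨p11.le, p12.le⟩ (hval.trans hv1.symm)
          exact ⟨m, Or.inr (Or.inr (by rw [e]))⟩
        · exfalso; linarith [hA1', hbound]
      · rcases le_or_gt θ' π with c2 | c2
        · obtain ⟨l, u⟩ := bd2 θ' c1.le c2
          rcases hj with rfl | rfl <;> norm_num at hval <;> exfalso
          · linarith [hbound]
          · linarith [hA1', hbound]
        · rcases le_or_gt θ' (x + π) with c3 | c3
          · obtain ⟨l, u⟩ := bd3 θ' c2.le c3
            rcases hj with rfl | rfl <;> norm_num at hval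
            · exfalso; linarith [hbound]
            · have e : θ' = θ₃ :=
                mono2.injOn ⟨c2.le, c3⟩ ⟨p31.le, p32.le⟩ (hval.trans hv3.symm)
              refine ⟨m + 1, Or.inl ?_⟩
              rw [e]; push_cast; ring
          · obtain ⟨l, u⟩ := bd4 θ' c3.le hhi.le
            rcases hj with rfl | rfl <;> norm_num at hval
            · exfalso; linarith [hA2]
            · have e : θ' = θ₄ :=
                anti2.injOn ⟨c3.le, hhi.le⟩ ⟨p41.le, p42.le⟩ (hval.trans hv4.symm)
              refine ⟨m + 1, Or.inr (Or.inl ?_)⟩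
              rw [e]; push_cast; ring
    have hsol1 : h (θ₃ - 2 * π) = α + 2 * π * (k0 : ℝ) := by
      rw [hsub, hv3, hAdef]; ring
    have hsol2 : h (θ₄ - 2 * π) = α + 2 * π * (k0 : ℝ) := by
      rw [hsub, hv4, hAdef]; ring
    have hspread : θ₁ - (θ₃ - 2 * π) < π := by
      have mem1 : θ₁ + π ∈ Set.Icc π (x + π) := ⟨by linarith, by linarith⟩
      have mem3 : θ₃ ∈ Set.Icc π (x + π) := ⟨p31.le, p32.le⟩
      have hv1' : h (θ₁ + π) = A + π := by rw [hper, hv1]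
      have : θ₁ + π < θ₃ := by
        rw [← mono2.lt_iff_lt mem1 mem3]
        rw [hv1', hv3]; linarith
      linarith
    have hd2neg : deriv h (θ₄ - 2 * π) < 0 := by
      rw [dersub]; exact dneg2 θ₄ p41 p42
    refine Or.inr ⟨⟨θ₃ - 2 * π, θ₄ - 2 * π, θ₁, by linarith, by linarith, hspread,
      ⟨k0, hsol1⟩, ⟨k0, hsol2⟩, ⟨k0, by rw [hv1, hAdef]⟩,
      by rw [dersub]; exact dpos2 θ₃ p31 p32, hd2neg,
      hpos θ₁ ⟨p11, p12⟩, cls⟩, ?_⟩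
    rintro ⟨_, hall⟩
    have := hall (θ₄ - 2 * π) ⟨k0, hsol2⟩
    linarith
  · exact absurd hc hAnexpi
  · rcases lt_trichotomy A (h 0 + π) with hd | hd | hd
    · -- CASE 2 : A ∈ (h x - π, h 0 + π) : one solution class, increasing
      obtain ⟨θ₁, p11, p12, hv1⟩ := ex1 A hA1' (by linarith)
      have cls : ∀ θ : ℝ, (∃ k : ℤ, h θ = α + 2 * π * k) →
          ∃ m : ℤ, θ = θ₁ + 2 * π * m := by
        intro θ hs
        obtain ⟨m, j, θ', rfl, hlo, hhi, hval, hj⟩ := reduce θ hs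
        rcases le_or_gt θ' x with c1 | c1
        · obtain ⟨l, u⟩ := bd1 θ' hlo c1
          rcases hj with rfl | rfl <;> norm_num at hval
          · have e : θ' = θ₁ :=
              mono1.injOn ⟨hlo, c1⟩ ⟨p11.le, p12.le⟩ (hval.trans hv1.symm)
            exact ⟨m, by rw [e]⟩
          · exfalso; linarith
        · rcases le_or_gt θ' π with c2 | c2
          · obtain ⟨l, u⟩ := bd2 θ' c1.le c2
            rcases hj with rfl | rfl <;> norm_num at hval <;> exfalso <;> linarith
          · rcases le_or_gt θ' (x + π) with c3 | c3
            · obtain ⟨l, u⟩ := bd3 θ' c2.le c3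
              rcases hj with rfl | rfl <;> norm_num at hval <;> exfalso <;> linarith
            · obtain ⟨l, u⟩ := bd4 θ' c3.le hhi.le
              rcases hj with rfl | rfl <;> norm_num at hval <;> exfalso
              · linarith [hA2]
              · linarith
      have apos : ∀ θ : ℝ, (∃ k : ℤ, h θ = α + 2 * π * k) → 0 < deriv h θ := by
        intro θ hs
        obtain ⟨m, rfl⟩ := cls θ hs
        rw [der2Z]
        exact hpos θ₁ ⟨p11, p12⟩
      refine Or.inl ⟨⟨⟨θ₁, ⟨k0, by rw [hv1, hAdef]⟩, cls⟩, apos⟩, ?_⟩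
      rintro ⟨t1, t2, t3, _, _, _, _, hs2, _, _, hd2, _, _⟩
      have := apos t2 hs2
      linarith
    · exact absurd hd hAne0pi
    · rcases lt_trichotomy A (h x) with he | he | he
      · -- CASE 3 : A ∈ (h 0 + π, h x) : three solution classes
        obtain ⟨θ₁, p11, p12, hv1⟩ := ex1 A (by linarith) he
        obtain ⟨θ₂, p21, p22, hv2⟩ := ex2 A hd he
        obtain ⟨θ₃, p31, p32, hv3⟩ := ex3 A hd (by linarith)
        have cls : ∀ θ : ℝ, (∃ k : ℤ, h θ = α + 2 * π * k) →
            ∃ m : ℤ, θ = θ₁ + 2 * π * m ∨ θ = θ₂ + 2 * π * m ∨ θ = θ₃ + 2 * π * m := by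
          intro θ hs
          obtain ⟨m, j, θ', rfl, hlo, hhi, hval, hj⟩ := reduce θ hs
          rcases le_or_gt θ' x with c1 | c1
          · obtain ⟨l, u⟩ := bd1 θ' hlo c1
            rcases hj with rfl | rfl <;> norm_num at hval
            · have e : θ' = θ₁ :=
                mono1.injOn ⟨hlo, c1⟩ ⟨p11.le, p12.le⟩ (hval.trans hv1.symm)
              exact ⟨m, Or.inl (by rw [e])⟩
            · exfalso; linarith [hbound, hπ]
          · rcases le_or_gt θ' π with c2 | c2
            · obtain ⟨l, u⟩ := bd2 θ' c1.le c2
              rcases hj with rfl | rfl <;> norm_num at hval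
              · have e : θ' = θ₂ :=
                  anti1.injOn ⟨c1.le, c2⟩ ⟨p21.le, p22.le⟩ (hval.trans hv2.symm)
                exact ⟨m, Or.inr (Or.inl (by rw [e]))⟩
              · exfalso; linarith [hbound, hπ]
            · rcases le_or_gt θ' (x + π) with c3 | c3
              · obtain ⟨l, u⟩ := bd3 θ' c2.le c3
                rcases hj with rfl | rfl <;> norm_num at hval
                · have e : θ' = θ₃ :=
                    mono2.injOn ⟨c2.le, c3⟩ ⟨p31.le, p32.le⟩ (hval.trans hv3.symm)
                  exact ⟨m, Or.inr (Or.inr (by rw [e]))⟩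
                · exfalso; linarith [hbound]
              · obtain ⟨l, u⟩ := bd4 θ' c3.le hhi.le
                rcases hj with rfl | rfl <;> norm_num at hval <;> exfalso
                · linarith [hA2]
                · linarith [hbound]
        have hspread : θ₃ - θ₁ < π := by
          have mem1 : θ₁ + π ∈ Set.Icc π (x + π) := ⟨by linarith, by linarith⟩
          have mem3 : θ₃ ∈ Set.Icc π (x + π) := ⟨p31.le, p32.le⟩
          have hv1' : h (θ₁ + π) = A + π := by rw [hper, hv1]
          have : θ₃ < θ₁ + π := by
            rw [← mono2.lt_iff_lt mem3 mem1]
            rw [hv1', hv3]; linarith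
          linarith
        refine Or.inr ⟨⟨θ₁, θ₂, θ₃, by linarith, by linarith, hspread,
          ⟨k0, by rw [hv1, hAdef]⟩, ⟨k0, by rw [hv2, hAdef]⟩, ⟨k0, by rw [hv3, hAdef]⟩,
          hpos θ₁ ⟨p11, p12⟩, hneg θ₂ ⟨p21, p22⟩, dpos2 θ₃ p31 p32, cls⟩, ?_⟩
        rintro ⟨_, hall⟩
        have := hall θ₂ ⟨k0, by rw [hv2, hAdef]⟩
        linarith [hneg θ₂ ⟨p21, p22⟩]
      · exact absurd he hAnex
      · -- CASE 4 : A ∈ (h x, h 0 + 2π) : one solution class, increasing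
        obtain ⟨θ₃, p31, p32, hv3⟩ := ex3 A (by linarith) (by linarith [hA2, hbgt])
        have cls : ∀ θ : ℝ, (∃ k : ℤ, h θ = α + 2 * π * k) →
            ∃ m : ℤ, θ = θ₃ + 2 * π * m := by
          intro θ hs
          obtain ⟨m, j, θ', rfl, hlo, hhi, hval, hj⟩ := reduce θ hs
          rcases le_or_gt θ' x with c1 | c1
          · obtain ⟨l, u⟩ := bd1 θ' hlo c1
            rcases hj with rfl | rfl <;> norm_num at hval <;> exfalso <;> linarith
          · rcases le_or_gt θ' π with c2 | c2
            · obtain ⟨l, u⟩ := bd2 θ' c1.le c2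
              rcases hj with rfl | rfl <;> norm_num at hval <;> exfalso <;> linarith
            · rcases le_or_gt θ' (x + π) with c3 | c3
              · obtain ⟨l, u⟩ := bd3 θ' c2.le c3
                rcases hj with rfl | rfl <;> norm_num at hval
                · have e : θ' = θ₃ :=
                    mono2.injOn ⟨c2.le, c3⟩ ⟨p31.le, p32.le⟩ (hval.trans hv3.symm)
                  exact ⟨m, by rw [e]⟩
                · exfalso; linarith [hπ]
              · obtain ⟨l, u⟩ := bd4 θ' c3.le hhi.le
                rcases hj with rfl | rfl <;> norm_num at hval <;> exfalso
                · linarith [hA2]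
                · linarith [hπ]
        have apos : ∀ θ : ℝ, (∃ k : ℤ, h θ = α + 2 * π * k) → 0 < deriv h θ := by
          intro θ hs
          obtain ⟨m, rfl⟩ := cls θ hs
          rw [der2Z]
          exact dpos2 θ₃ p31 p32
        refine Or.inl ⟨⟨⟨θ₃, ⟨k0, by rw [hv3, hAdef]⟩, cls⟩, apos⟩, ?_⟩
        rintro ⟨t1, t2, t3, _, _, _, _, hs2, _, _, hd2, _, _⟩
        have := apos t2 hs2
        linarith
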